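/- Let A be a unital algebra of bounded operators on a Hilbert space H, D a self-adjoint operator on H, and h = h* ∈ A. Set D' = e^h D e^h and σ(a) = e^{2h} a e^{-2h}. If [D, b] is bounded for every b ∈ A, then for every a ∈ A the twisted commutator D' a − σ(a) D' is bounded; in fact D' a − σ(a) D' = e^h [D, b] e^h where b = e^h a e^{-h}. -/

import Mathlib

open NormedSpace
open scoped InnerProductSpace

lemma exp_mem_topologicalClosure {H : Type*} [NormedAddCommGroup H]
    [InnerProductSpace ℂ H] [CompleteSpace H]
    (A : StarSubalgebra ℂ (H →L[ℂ] H)) (h : H →L[ℂ] H) (hhA : h ∈ A) :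
    exp h ∈ A.topologicalClosure := by
  have hs := (expSeries_hasSum_exp (𝕂 := ℂ) h).tendsto_sum_nat
  refine (A.isClosed_topologicalClosure).mem_of_tendsto hs
    (Filter.Eventually.of_forall fun n => sum_mem fun i _ => ?_)
  rw [expSeries_apply_eq]
  exact A.le_topologicalClosure (A.smul_mem (A.pow_mem hhA i) _)

/-- for a unital *-algebra `A` of bounded operators on a Hilbert
space `H`, a self-adjoint (possibly unbounded, everywhere defined) operator `D`
all of whose commutators with elements of (the closure of) `A` are bounded, and
a self-adjoint `h ∈ A`, setting `D' = e^h D e^h` and `σ(a) = e^{2h} a e^{-2h}`,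
the twisted commutator `D' a − σ(a) D'` equals `e^h [D, b] e^h` with
`b = e^h a e^{-h}`, and in particular it is bounded for every `a ∈ A`. -/
theorem perturbed_triple_twisted_commutator {H : Type*} [NormedAddCommGroup H]
    [InnerProductSpace ℂ H] [CompleteSpace H]
    (A : StarSubalgebra ℂ (H →L[ℂ] H)) (D : H →ₗ[ℂ] H)
    (hsym : ∀ x y : H, ⟪D x, y⟫_ℂ = ⟪x, D y⟫_ℂ)
    (h : H →L[ℂ] H) (hhA : h ∈ A) (hsa : IsSelfAdjoint h)
    (hbd : ∀ b : H →L[ℂ] H, b ∈ A.topologicalClosure →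
      ∃ C : H →L[ℂ] H, (C : H →ₗ[ℂ] H)
        = D ∘ₗ (b : H →ₗ[ℂ] H) - (b : H →ₗ[ℂ] H) ∘ₗ D)
    (a : H →L[ℂ] H) (ha : a ∈ A)
    (D' : H →ₗ[ℂ] H)
    (hD' : D' = ((exp h : H →L[ℂ] H) : H →ₗ[ℂ] H) ∘ₗ D ∘ₗ
        ((exp h : H →L[ℂ] H) : H →ₗ[ℂ] H))
    (σa b : H →L[ℂ] H)
    (hσa : σa = exp ((2 : ℂ) • h) * a * exp (-((2 : ℂ) • h)))
    (hb : b = exp h * a * exp (-h)) :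
    D' ∘ₗ (a : H →ₗ[ℂ] H) - (σa : H →ₗ[ℂ] H) ∘ₗ D'
        = ((exp h : H →L[ℂ] H) : H →ₗ[ℂ] H) ∘ₗ
            (D ∘ₗ (b : H →ₗ[ℂ] H) - (b : H →ₗ[ℂ] H) ∘ₗ D) ∘ₗ
            ((exp h : H →L[ℂ] H) : H →ₗ[ℂ] H)
      ∧ ∃ C : H →L[ℂ] H, (C : H →ₗ[ℂ] H)
          = D' ∘ₗ (a : H →ₗ[ℂ] H) - (σa : H →ₗ[ℂ] H) ∘ₗ D' := by
  -- basic exponential identities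
  let _ : NormedAlgebra ℚ (H →L[ℂ] H) := .restrictScalars ℚ ℂ _
  have h2 : exp ((2 : ℂ) • h) = exp h * exp h := by
    rw [show ((2 : ℂ) • h) = h + h by rw [two_smul], exp_add_of_commute (Commute.refl h)]
  have h2' : exp (-((2 : ℂ) • h)) = exp (-h) * exp (-h) := by
    rw [show (-((2 : ℂ) • h)) = (-h) + (-h) by rw [two_smul, neg_add],
      exp_add_of_commute ((Commute.refl h).neg_left.neg_right)]
  have hfe : exp (-h) * exp h = (1 : H →L[ℂ] H) := by
    rw [← exp_add_of_commute ((Commute.refl h).neg_left), neg_add_cancel, exp_zero]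
  -- pass to linear maps
  set e : H →ₗ[ℂ] H := ((exp h : H →L[ℂ] H) : H →ₗ[ℂ] H) with he
  set f : H →ₗ[ℂ] H := ((exp (-h) : H →L[ℂ] H) : H →ₗ[ℂ] H) with hf
  have hfe' : f * e = 1 := by
    rw [he, hf]
    rw [show (↑(exp (-h)) : H →ₗ[ℂ] H) * ↑(exp h)
        = ((exp (-h) * exp h : H →L[ℂ] H) : H →ₗ[ℂ] H) from by
      rw [ContinuousLinearMap.mul_def, ContinuousLinearMap.toLinearMap_comp,
        Module.End.mul_eq_comp]]
    rw [hfe]; rfl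
  have key : ∀ x : H →ₗ[ℂ] H, f * (e * x) = x := fun x => by
    rw [← mul_assoc, hfe', one_mul]
  have hbl : (b : H →ₗ[ℂ] H) = e * ((a : H →ₗ[ℂ] H) * f) := by
    rw [hb]
    simp only [ContinuousLinearMap.mul_def, ContinuousLinearMap.toLinearMap_comp,
      ← Module.End.mul_eq_comp, ← he, ← hf, mul_assoc]
  have hσl : (σa : H →ₗ[ℂ] H) = e * (e * ((a : H →ₗ[ℂ] H) * (f * f))) := by
    rw [hσa, h2, h2']
    simp only [ContinuousLinearMap.mul_def, ContinuousLinearMap.toLinearMap_comp,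
      ← Module.End.mul_eq_comp, ← he, ← hf, mul_assoc]
  have main : D' ∘ₗ (a : H →ₗ[ℂ] H) - (σa : H →ₗ[ℂ] H) ∘ₗ D'
      = e ∘ₗ (D ∘ₗ (b : H →ₗ[ℂ] H) - (b : H →ₗ[ℂ] H) ∘ₗ D) ∘ₗ e := by
    simp only [← Module.End.mul_eq_comp, hD', hσl, hbl, ← he]
    simp only [mul_sub, sub_mul, mul_assoc, key, hfe', mul_one]
  refine ⟨main, ?_⟩
  -- boundedness
  have hbmem : b ∈ A.topologicalClosure := by
    rw [hb]
    exact mul_mem (mul_mem (exp_mem_topologicalClosure A h hhA)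
      (A.le_topologicalClosure ha)) (exp_mem_topologicalClosure A (-h) (neg_mem hhA))
  obtain ⟨C, hC⟩ := hbd b hbmem
  refine ⟨exp h * C * exp h, ?_⟩
  rw [main]
  simp only [ContinuousLinearMap.mul_def, ContinuousLinearMap.toLinearMap_comp,
    ← Module.End.mul_eq_comp, ← he, hC, ← Module.End.mul_eq_comp, mul_assoc]
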